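/- Let α < 1, α ≠ 0, β > 0, λ > 0, γ ∈ (0,1) with (2-γ)α ≠ 1. Suppose the flexible and rigid total-information functions agree at τ = f(γ): i.e., τ + ψ_c(τ) = τ/(1-γ) where f(γ) = (2β²/λ)(1-γ)/(1-αγ)². Then the difference of derivatives satisfies (α·(1/f'(γ))/(1-αγ) + (1-γ)/(2(1-α)f(γ))) · α = λα(αγ-1)³/(4(1-α)β²(1-(2-γ)α)). Consequently, if 1-(2-γ)α > 0 and 0 < α < 1 this quantity is negative (flexible crowding-out larger), and if α < 0 it is positive. -/

import Mathlib

theorem stmt_18 (α β lam c γ fd : ℝ) (hα : α < 1) (hα0 : α ≠ 0) (hβ : 0 < β)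
    (hlam : 0 < lam) (hc : 0 < c)
    (hγ : γ ∈ Set.Ioo (0:ℝ) 1) (hne : (2-γ)*α ≠ 1)
    (hfd : HasDerivAt (fun g : ℝ => (2*β^2/lam)*(1-g)/(1-α*g)^2) fd γ)
    (hagree : (2*β^2/lam)*(1-γ)/(1-α*γ)^2
        + (β/Real.sqrt c - (2*β^2/lam)*(1-γ)/(1-α*γ)^2)/(1-α)
      = ((2*β^2/lam)*(1-γ)/(1-α*γ)^2)/(1-γ)) :
    α * ((1/fd)/(1-α*γ) + (1-γ)/(2*(1-α)*((2*β^2/lam)*(1-γ)/(1-α*γ)^2)))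
      = lam*α*(α*γ-1)^3/(4*(1-α)*β^2*(1-(2-γ)*α)) ∧
    (0 < α → 0 < 1-(2-γ)*α →
      α * ((1/fd)/(1-α*γ) + (1-γ)/(2*(1-α)*((2*β^2/lam)*(1-γ)/(1-α*γ)^2))) < 0) ∧
    (α < 0 →
      0 < α * ((1/fd)/(1-α*γ) + (1-γ)/(2*(1-α)*((2*β^2/lam)*(1-γ)/(1-α*γ)^2)))) := by
  obtain ⟨hγ0, hγ1⟩ := hγ
  have hαγ : α * γ < 1 := by nlinarith
  have h1 : (1 : ℝ) - α * γ ≠ 0 := by linarith [hαγ]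
  have h1' : ((1 : ℝ) - α * γ) ≠ 0 := h1
  have hden : ∀ x : ℝ, (1 - α * x)^2 = (fun g : ℝ => (1 - α*g)^2) x := fun _ => rfl
  -- explicit derivative
  have hnum : HasDerivAt (fun g : ℝ => (2*β^2/lam)*(1-g)) (-(2*β^2/lam)) γ := by
    have := ((hasDerivAt_id γ).const_sub 1).const_mul (2*β^2/lam)
    simpa using this
  have hd : HasDerivAt (fun g : ℝ => (1-α*g)^2) (2*(1-α*γ)*(-α)) γ := by
    have h0 : HasDerivAt (fun g : ℝ => 1 - α*g) (-α) γ := by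
      simpa using ((hasDerivAt_id γ).const_mul α).const_sub 1
    simpa using h0.fun_pow 2
  have hfd2 : HasDerivAt (fun g : ℝ => (2*β^2/lam)*(1-g)/(1-α*g)^2)
      ((-(2*β^2/lam) * (1-α*γ)^2 - (2*β^2/lam)*(1-γ) * (2*(1-α*γ)*(-α))) / ((1-α*γ)^2)^2) γ :=
    hnum.div hd (pow_ne_zero 2 h1)
  have hfdval : fd = (2*β^2/lam) * ((2-γ)*α - 1) / (1-α*γ)^3 := by
    have := hfd.unique hfd2
    rw [this]
    field_simp
    ring
  have hne' : (2-γ)*α - 1 ≠ 0 := sub_ne_zero.mpr hne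
  have h1α : (0:ℝ) < 1 - α := by linarith
  have hγ1' : (0:ℝ) < 1 - γ := by linarith
  have hfdne : fd ≠ 0 := by
    rw [hfdval]
    apply div_ne_zero
    · exact mul_ne_zero (by positivity) hne'
    · exact pow_ne_zero 3 h1
  have key : α * ((1/fd)/(1-α*γ) + (1-γ)/(2*(1-α)*((2*β^2/lam)*(1-γ)/(1-α*γ)^2)))
      = lam*α*(α*γ-1)^3/(4*(1-α)*β^2*(1-(2-γ)*α)) := by
    rw [hfdval]
    have hne'' : (1:ℝ) - (2-γ)*α ≠ 0 := by
      intro h; apply hne'; linarith [sub_eq_zero.mp h]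
    have hne3 : (-1 + α * 2 - α * γ) ≠ 0 := by
      intro h; apply hne'; linarith
    have hne4 : (1 - α * 2 + α * γ) ≠ 0 := by
      intro h; apply hne'; linarith
    field_simp
    ring_nf
    field_simp
    ring
  refine ⟨key, ?_, ?_⟩
  · intro hα0' hpos
    rw [key]
    have hcube : (α*γ - 1)^3 < 0 := by
      apply Odd.pow_neg ⟨1, by ring⟩
      linarith
    have : lam*α*(α*γ-1)^3 < 0 := by
      have := mul_pos hlam hα0'
      nlinarith
    apply div_neg_of_neg_of_pos this
    positivity
  · intro hαneg
    rw [key]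
    have hpos : 0 < 1 - (2-γ)*α := by nlinarith
    have hcube : (α*γ - 1)^3 < 0 := by
      apply Odd.pow_neg ⟨1, by ring⟩
      nlinarith
    apply div_pos
    · nlinarith [mul_pos hlam (neg_pos.mpr hαneg)]
    · positivity
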